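/- Let K be a field of characteristic zero and let n ≥ 2. If D is a locally nilpotent K-derivation of the polynomial ring K[x_1,…,x_n], then D is not a simple derivation. -/

import Mathlib

open MvPolynomial

/-- A `K`-subspace `M` of `R` is a Mathieu–Zhao space if for all `a, b ∈ R` such that
`a ^ m ∈ M` for all `m ≥ 1`, there exists `N` such that `b * a ^ m ∈ M` for all `m ≥ N`. -/
def IsMathieuZhao (K : Type*) {R : Type*} [Field K] [CommRing R] [Algebra K R]
    (M : Submodule K R) : Prop :=
  ∀ a b : R, (∀ m : ℕ, 1 ≤ m → a ^ m ∈ M) →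
    ∃ N : ℕ, ∀ m : ℕ, N ≤ m → b * a ^ m ∈ M

/-- A `K`-derivation `D` of `R` is simple if the only ideals `I` of `R` with `D(I) ⊆ I`
are `0` and `R`. -/
def Derivation.IsSimple {K R : Type*} [CommRing K] [CommRing R] [Algebra K R]
    (D : Derivation K R R) : Prop :=
  ∀ I : Ideal R, (∀ a ∈ I, D a ∈ I) → I = ⊥ ∨ I = ⊤

section Aux

variable {K : Type*} [Field K]

lemma aux_X_ne_C {σ : Type*} (i : σ) (c : K) : (X i : MvPolynomial σ K) ≠ C c := by
  classical
  intro h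
  have h1 : MvPolynomial.coeff (Finsupp.single i 1) (X i : MvPolynomial σ K) = 1 :=
    MvPolynomial.coeff_X_same i
  rw [h, MvPolynomial.coeff_C] at h1
  have h2 : ¬ ((0 : σ →₀ ℕ) = Finsupp.single i 1) := by
    intro h2
    simpa using (Finsupp.single_eq_zero.mp h2.symm)
  rw [if_neg h2] at h1
  exact zero_ne_one h1

lemma aux_isUnit_eq_C : ∀ (m : ℕ) (f : MvPolynomial (Fin m) K), IsUnit f → ∃ c : K, f = C c := by
  intro m
  induction m with
  | zero => exact fun f _ => ⟨constantCoeff f, eq_C_of_isEmpty f⟩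
  | succ m ih =>
    intro f hf
    have hf' : IsUnit (finSuccEquiv K m f) := hf.map _
    obtain ⟨q, hq, hCq⟩ := Polynomial.isUnit_iff.mp hf'
    obtain ⟨c, rfl⟩ := ih q hq
    refine ⟨c, ?_⟩
    have h2 : finSuccEquiv K m (C c) = Polynomial.C (C c) := by
      simp [finSuccEquiv_apply]
    have h3 := congrArg (finSuccEquiv K m).symm hCq
    rw [AlgEquiv.symm_apply_apply, ← h2, AlgEquiv.symm_apply_apply] at h3
    exact h3.symm

/-- coefficients of the Dixmier map -/
noncomputable def mzC (K : Type*) [Field K] (k : ℕ) : K := (-1)^k * ((k.factorial : K))⁻¹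

lemma mzC_succ [CharZero K] (k : ℕ) : mzC K k + ((k:K)+1) * mzC K (k+1) = 0 := by
  unfold mzC
  have h1 : ((k.factorial : K)) ≠ 0 := Nat.cast_ne_zero.mpr (Nat.factorial_ne_zero k)
  have h2 : ((k:K)+1) ≠ 0 := Nat.cast_add_one_ne_zero k
  rw [Nat.factorial_succ, pow_succ]
  push_cast
  field_simp
  ring

variable [CharZero K] {R : Type*} [CommRing R] [Algebra K R] (D : Derivation K R R)

lemma D_sum_eq {p : R} (hp : D p = 1) (r : R) (m : ℕ) :
    D (∑ k ∈ Finset.range (m+1), mzC K k • (p ^ k * (⇑D)^[k] r))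
      = mzC K m • (p ^ m * (⇑D)^[m+1] r) := by
  induction m with
  | zero => simp [mzC]
  | succ m ih =>
    rw [Finset.sum_range_succ, map_add, ih, Derivation.map_smul, Derivation.leibniz,
        Derivation.leibniz_pow, hp, Function.iterate_succ_apply' D (m+1) r]
    have hsm : (m+1) • (p ^ (m+1-1) : R) • (1:R) = (((m:K)+1)) • p ^ m := by
      rw [smul_eq_mul, mul_one, Nat.add_sub_cancel, ← Nat.cast_smul_eq_nsmul K]
      push_cast
      ring_nf
    rw [smul_add, hsm]
    have key : mzC K m • (p ^ m * (⇑D)^[m+1] r)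
        + mzC K (m+1) • (((⇑D)^[m+1] r) • (((m:K)+1) • p ^ m)) = 0 := by
      rw [smul_comm ((⇑D)^[m+1] r) (((m:K)+1)) (p^m), smul_smul, smul_eq_mul,
        mul_comm ((⇑D)^[m+1] r) _, ← smul_smul, smul_smul,
        mul_comm (mzC K (m+1)) _, ← add_smul, mzC_succ, zero_smul]
    have : mzC K m • (p ^ m * (⇑D)^[m+1] r)
        + (mzC K (m+1) • ((p^(m+1)) • D ((⇑D)^[m+1] r)) + mzC K (m+1) • (((⇑D)^[m+1] r) • (((m:K)+1) • p ^ m)))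
        = mzC K (m+1) • (p ^ (m+1) * D ((⇑D)^[m+1] r)) := by
      rw [smul_eq_mul]
      linear_combination (norm := ring_nf) key
    simpa [smul_add] using this

lemma exists_ker_rep {p : R} (hp : D p = 1) (r : R) (m : ℕ) (hm : (⇑D)^[m+1] r = 0) :
    ∃ s g, D s = 0 ∧ r = s + p * g := by
  refine ⟨∑ k ∈ Finset.range (m+1), mzC K k • (p ^ k * (⇑D)^[k] r),
    -∑ k ∈ Finset.range m, mzC K (k+1) • (p ^ k * (⇑D)^[k+1] r), ?_, ?_⟩
  · rw [D_sum_eq D hp r m, hm]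
    simp
  · rw [Finset.sum_range_succ']
    have h0 : mzC K 0 • (p ^ 0 * (⇑D)^[0] r) = r := by simp [mzC]
    rw [h0, mul_neg, Finset.mul_sum]
    have hterm : ∀ k, mzC K (k+1) • (p ^ (k+1) * (⇑D)^[k+1] r)
        = p * (mzC K (k+1) • (p ^ k * (⇑D)^[k+1] r)) := by
      intro k
      rw [mul_smul_comm, pow_succ', mul_assoc]
    rw [Finset.sum_congr rfl (fun k _ => hterm k)]
    ring

end Aux


/-- A locally nilpotent `K`-derivation of `K[x₁, …, xₙ]`, `n ≥ 2`,
is not simple. -/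
theorem statement13 (K : Type*) [Field K] [CharZero K]
    (n : ℕ) (hn : 2 ≤ n)
    (D : Derivation K (MvPolynomial (Fin n) K) (MvPolynomial (Fin n) K))
    (hln : ∀ f : MvPolynomial (Fin n) K, ∃ m : ℕ, 0 < m ∧ (⇑D)^[m] f = 0) :
    ¬ Derivation.IsSimple D := by
  intro hsimp
  classical
  by_cases hex : ∃ s : MvPolynomial (Fin n) K, D s = 0 ∧ ∀ c : K, s ≠ C c
  · obtain ⟨s, hs0, hsc⟩ := hex
    have hsne : s ≠ 0 := fun h => hsc 0 (by simp [h])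
    have hstab : ∀ a ∈ Ideal.span {s}, D a ∈ Ideal.span {s} := by
      intro a ha
      rw [Ideal.mem_span_singleton] at ha ⊢
      obtain ⟨t, rfl⟩ := ha
      refine ⟨D t, ?_⟩
      rw [Derivation.leibniz, hs0]
      simp only [smul_eq_mul, mul_zero, add_zero]
    rcases hsimp _ hstab with h | h
    · exact hsne (by rwa [Ideal.span_singleton_eq_bot] at h)
    · rw [Ideal.span_singleton_eq_top] at h
      obtain ⟨c, hc⟩ := aux_isUnit_eq_C n s h
      exact hsc c hc
  · push_neg at hex
    obtain ⟨m2, rfl⟩ : ∃ m2, n = m2 + 2 := ⟨n - 2, by omega⟩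
    -- find p with D p = 1
    by_cases hD : ∀ f, D f = 0
    · obtain ⟨c, hc⟩ := hex (X 0) (hD _)
      exact aux_X_ne_C (0 : Fin (m2+2)) c hc
    push_neg at hD
    obtain ⟨f, hf⟩ := hD
    have hfe : ∃ k, (⇑D)^[k] f = 0 := (hln f).imp fun m h => h.2
    set k := Nat.find hfe with hkdef
    have hk : (⇑D)^[k] f = 0 := Nat.find_spec hfe
    have hk0 : k ≠ 0 := by
      intro h
      rw [h, Function.iterate_zero_apply] at hk
      rw [hk] at hf
      exact hf (map_zero D)
    have hk1 : k ≠ 1 := by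
      intro h
      rw [h, Function.iterate_one] at hk
      exact hf hk
    obtain ⟨j, hj⟩ : ∃ j, k = j + 2 := ⟨k - 2, by omega⟩
    have hs1 : D ((⇑D)^[j+1] f) = 0 := by
      have h6 : (⇑D)^[j+1+1] f = 0 := by rw [show j+1+1 = k by omega]; exact hk
      rw [← Function.iterate_succ_apply' D (j+1) f]
      exact h6
    have hs2 : (⇑D)^[j+1] f ≠ 0 := Nat.find_min hfe (by omega)
    obtain ⟨c, hc⟩ := hex _ hs1
    have hcne : c ≠ 0 := by
      rintro rfl
      rw [map_zero] at hc
      exact hs2 hc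
    set p : MvPolynomial (Fin (m2+2)) K := C c⁻¹ * (⇑D)^[j] f with hpdef
    have hp : D p = 1 := by
      rw [hpdef, ← smul_eq_C_mul, Derivation.map_smul,
        ← Function.iterate_succ_apply' D j f, hc, smul_eq_C_mul, ← C_mul,
        inv_mul_cancel₀ hcne, C_1]
    -- representations for the variables
    have rep : ∀ i : Fin (m2+2), ∃ ci g, X i = C ci + p * g := by
      intro i
      obtain ⟨m, hm0, hm⟩ := hln (X i)
      obtain ⟨m', rfl⟩ : ∃ m', m = m' + 1 := ⟨m-1, by omega⟩
      obtain ⟨s, g, hsD, hrep⟩ := exists_ker_rep D hp (X i) m' hm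
      obtain ⟨ci, hci⟩ := hex s hsD
      exact ⟨ci, g, by rw [hrep, hci]⟩
    obtain ⟨c0, g0, h0⟩ := rep 0
    obtain ⟨c1, g1, h1⟩ := rep 1
    set φ := finSuccEquiv K (m2+1) with hφdef
    have e0 : φ (X 0) = Polynomial.X := finSuccEquiv_X_zero
    have e1 : φ (X 1) = Polynomial.C (X 0) := by
      rw [← Fin.succ_zero_eq_one, finSuccEquiv_X_succ]
    have hCmap : ∀ a : K, φ (C a) = Polynomial.C (C a) := by
      intro a
      simp [hφdef, finSuccEquiv_apply]
    have E1 : φ p * φ g1 = Polynomial.C (X 0 - C c1) := by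
      have hh := congrArg φ h1
      rw [map_add, map_mul, e1, hCmap] at hh
      rw [map_sub]
      linear_combination -hh
    have E0 : φ p * φ g0 = Polynomial.X - Polynomial.C (C c0) := by
      have hh := congrArg φ h0
      rw [map_add, map_mul, e0, hCmap] at hh
      linear_combination -hh
    have hpne : p ≠ 0 := by
      intro h
      rw [h, map_zero] at hp
      exact zero_ne_one hp
    have hφp : φ p ≠ 0 := fun h => hpne (φ.injective (h.trans (map_zero φ).symm))
    have hg1ne : φ g1 ≠ 0 := by
      intro h
      rw [h, mul_zero] at E1
      have h2 : (X 0 : MvPolynomial (Fin (m2+1)) K) - C c1 = 0 := by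
        exact_mod_cast Polynomial.C_eq_zero.mp E1.symm
      exact aux_X_ne_C (0 : Fin (m2+1)) c1 (by rwa [sub_eq_zero] at h2)
    have hdeg : (φ p).natDegree = 0 := by
      have hnd := Polynomial.natDegree_mul hφp hg1ne
      rw [E1, Polynomial.natDegree_C] at hnd
      omega
    obtain ⟨q, hq⟩ : ∃ q, φ p = Polynomial.C q :=
      ⟨_, Polynomial.eq_C_of_natDegree_eq_zero hdeg⟩
    have hcoeff : q * (φ g0).coeff 1 = 1 := by
      have hh := congrArg (fun t => Polynomial.coeff t 1) E0
      simpa [hq, Polynomial.coeff_C_mul, Polynomial.coeff_X_one, Polynomial.coeff_C] using hh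
    have hpunit : IsUnit p := by
      have h3 : IsUnit (φ p) := by
        rw [hq]
        exact Polynomial.isUnit_C.mpr (IsUnit.of_mul_eq_one _ hcoeff)
      have h4 := h3.map φ.symm
      rwa [AlgEquiv.symm_apply_apply] at h4
    obtain ⟨cp, hcp⟩ := aux_isUnit_eq_C (m2+2) p hpunit
    rw [hcp] at hp
    have hzero : D (C cp) = 0 := by
      have h5 := D.map_algebraMap cp
      rwa [MvPolynomial.algebraMap_eq] at h5
    rw [hzero] at hp
    exact zero_ne_one hp
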